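/- Let u : ℝ → ℝ be twice continuously differentiable and Δx > 0 with cell averages defined as in WENO3. Then the sub-stencil interpolant u⁽¹⁾ = (ū_i + ū_{i+1})/2 satisfies u⁽¹⁾ = u(x_{i+1/2}) + O(Δx²) as Δx → 0, where x_{i+1/2} = x_i + Δx/2. -/

import Mathlib

open MeasureTheory intervalIntegral Filter Asymptotics

/-- Cell average of `u` over a cell of width `Δx` centered at `xc`. -/
noncomputable def cellAvg (u : ℝ → ℝ) (xc Δx : ℝ) : ℝ :=
  (1/Δx) * ∫ x in (xc - Δx/2)..(xc + Δx/2), u x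

theorem weno3_substencil1_second_order (u : ℝ → ℝ) (hu : ContDiff ℝ 2 u) (xi : ℝ) :
    (fun Δx : ℝ =>
        (cellAvg u xi Δx + cellAvg u (xi + Δx) Δx) / 2 - u (xi + Δx/2))
      =O[nhdsWithin 0 (Set.Ioi 0)] fun Δx : ℝ => Δx^2 := by
  have hu2 : ContDiff ℝ ((1:ℕ)+1) u := by exact_mod_cast hu
  rw [contDiff_succ_iff_deriv] at hu2
  obtain ⟨hdiff, -, hu1⟩ := hu2
  have hu1' : ContDiff ℝ ((0:ℕ)+1) (deriv u) := by exact_mod_cast hu1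
  rw [contDiff_succ_iff_deriv] at hu1'
  obtain ⟨hdiff1, -, hu0⟩ := hu1'
  have hcont2 : Continuous (deriv (deriv u)) := hu0.continuous
  obtain ⟨C, hC⟩ := (isCompact_Icc (a := xi - 1) (b := xi + 2)).exists_bound_of_continuousOn
    hcont2.continuousOn
  set B := max C 0 with hB
  have hB0 : 0 ≤ B := le_max_right _ _
  have hCB : ∀ x ∈ Set.Icc (xi - 1) (xi + 2), ‖deriv (deriv u) x‖ ≤ B :=
    fun x hx => (hC x hx).trans (le_max_left _ _)
  rw [isBigO_iff]
  refine ⟨B, ?_⟩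
  filter_upwards [Ioo_mem_nhdsGT_of_mem (by norm_num : (0:ℝ) ∈ Set.Ico 0 1)] with Δx hΔ
  obtain ⟨hΔ0, hΔ1⟩ := hΔ
  set m := xi + Δx/2 with hm
  set a := m - Δx with ha
  set b := m + Δx with hb
  have hab : a ≤ b := by simp [ha, hb]; linarith
  have hsub : Set.Icc a b ⊆ Set.Icc (xi - 1) (xi + 2) := by
    apply Set.Icc_subset_Icc <;> simp [ha, hb, hm] <;> linarith
  have hmI : m ∈ Set.Icc a b := by constructor <;> simp [ha, hb] <;> linarith
  -- bound on deriv u - deriv u m on Icc a b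
  have hconv : Convex ℝ (Set.Icc a b) := convex_Icc a b
  have hd1 : ∀ y ∈ Set.Icc a b, ‖deriv u y - deriv u m‖ ≤ B * Δx := by
    intro y hy
    have := hconv.norm_image_sub_le_of_norm_hasDerivWithin_le
      (f := deriv u) (f' := deriv (deriv u))
      (fun x hx => ((hdiff1 x).hasDerivAt).hasDerivWithinAt)
      (fun x hx => hCB x (hsub hx)) hmI hy
    refine this.trans ?_
    have hym : ‖y - m‖ ≤ Δx := by
      rw [Real.norm_eq_abs, abs_le]
      constructor <;> [linarith [hy.1]; linarith [hy.2]]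
    exact mul_le_mul_of_nonneg_left hym hB0
  -- the Taylor remainder
  set g : ℝ → ℝ := fun y => u y - u m - deriv u m * (y - m) with hg
  have hgderiv : ∀ y, HasDerivAt g (deriv u y - deriv u m) y := by
    intro y
    have h1 : HasDerivAt (fun y => u y) (deriv u y) y := (hdiff y).hasDerivAt
    have h2 : HasDerivAt (fun y : ℝ => u m + deriv u m * (y - m)) (deriv u m) y := by
      have : HasDerivAt (fun y : ℝ => y - m) 1 y := (hasDerivAt_id y).sub_const m
      simpa using (this.const_mul (deriv u m)).const_add (u m)
    have := h1.sub h2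
    have e : g = (fun y => u y) - fun y : ℝ => u m + deriv u m * (y - m) := by
      funext z; simp [hg, sub_sub]
    rw [e]; exact this
  have hgbound : ∀ x ∈ Set.Icc a b, ‖g x‖ ≤ B * Δx * Δx := by
    intro x hx
    have := hconv.norm_image_sub_le_of_norm_hasDerivWithin_le
      (f := g) (f' := fun y => deriv u y - deriv u m)
      (fun y hy => (hgderiv y).hasDerivWithinAt) hd1 hmI hx
    have hgm : g m = 0 := by simp [hg]
    rw [hgm, sub_zero] at this
    refine this.trans ?_
    have hxm : ‖x - m‖ ≤ Δx := by
      rw [Real.norm_eq_abs, abs_le]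
      constructor <;> [linarith [hx.1]; linarith [hx.2]]
    exact mul_le_mul_of_nonneg_left hxm (by positivity)
  -- integral bound
  have hintg : ‖∫ x in a..b, g x‖ ≤ B * Δx * Δx * |b - a| := by
    apply intervalIntegral.norm_integral_le_of_norm_le_const
    intro x hx
    rw [Set.uIoc_of_le hab] at hx
    exact hgbound x (Set.Ioc_subset_Icc_self hx)
  have hba : |b - a| = 2 * Δx := by
    rw [abs_of_nonneg (by linarith)]; simp [ha, hb]; ring
  -- compute the integral of g
  have hcu : Continuous u := hdiff.continuous
  have hiu : IntervalIntegrable u volume a b := hcu.intervalIntegrable a b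
  have hilin : IntervalIntegrable (fun y : ℝ => u m + deriv u m * (y - m)) volume a b :=
    Continuous.intervalIntegrable (continuous_const.add (continuous_const.mul (continuous_id.sub continuous_const))) a b
  have hlin : (∫ y in a..b, (u m + deriv u m * (y - m))) = 2 * Δx * u m := by
    rw [intervalIntegral.integral_add (Continuous.intervalIntegrable continuous_const a b)
      (Continuous.intervalIntegrable (by fun_prop) a b)]
    rw [intervalIntegral.integral_const, intervalIntegral.integral_const_mul]
    have : (∫ y in a..b, (y - m)) = 0 := by
      rw [intervalIntegral.integral_sub (Continuous.intervalIntegrable (by fun_prop) a b)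
        (Continuous.intervalIntegrable (by fun_prop) a b),
        integral_id, intervalIntegral.integral_const]
      simp only [smul_eq_mul, hb, ha]; ring
    rw [this]
    simp only [smul_eq_mul, mul_zero, add_zero, hb, ha]; ring
  have hgint : (∫ x in a..b, g x) = (∫ x in a..b, u x) - 2 * Δx * u m := by
    have : (∫ x in a..b, g x) = (∫ x in a..b, u x) - ∫ y in a..b, (u m + deriv u m * (y - m)) := by
      rw [← intervalIntegral.integral_sub hiu hilin]
      apply intervalIntegral.integral_congr
      intro x _; simp [hg]; ring
    rw [this, hlin]
  -- the error identity
  have hsum : (∫ x in (xi - Δx/2)..(xi + Δx/2), u x)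
      + (∫ x in ((xi + Δx) - Δx/2)..((xi + Δx) + Δx/2), u x) = ∫ x in a..b, u x := by
    have h1 : (xi + Δx) - Δx/2 = xi + Δx/2 := by ring
    have h2 : a = xi - Δx/2 := by rw [ha, hm]; ring
    have h3 : b = (xi + Δx) + Δx/2 := by rw [hb, hm]; ring
    rw [h1, h2, h3]
    exact intervalIntegral.integral_add_adjacent_intervals
      (hcu.intervalIntegrable _ _) (hcu.intervalIntegrable _ _)
  have herr : (cellAvg u xi Δx + cellAvg u (xi + Δx) Δx) / 2 - u (xi + Δx/2)
      = (∫ x in a..b, g x) / (2 * Δx) := by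
    rw [hgint, ← hsum]
    unfold cellAvg
    have hΔne : Δx ≠ 0 := ne_of_gt hΔ0
    field_simp
    simp only [hm]
    ring
  rw [herr]
  rw [norm_div, Real.norm_eq_abs (2 * Δx), abs_of_pos (by linarith)]
  rw [div_le_iff₀ (by linarith)]
  calc ‖∫ x in a..b, g x‖ ≤ B * Δx * Δx * |b - a| := hintg
    _ = B * ‖Δx ^ 2‖ * (2 * Δx) := by
        rw [hba, Real.norm_eq_abs, abs_of_nonneg (by positivity)]; ring
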